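/- For every λ > 0, the integral A(λ) = ∫_0^∞ {t}{λt}/t² dt converges, and as λ → 0⁺ one has A(λ) = (λ/2) log(1/λ) + ((1 + A(1))/2) λ + O(λ²). -/

import Mathlib

open MeasureTheory Set

/-- `A(λ) = ∫_0^∞ {t}{λt}/t² dt`. -/
noncomputable def A (l : ℝ) : ℝ := ∫ t in Ioi (0:ℝ), Int.fract t * Int.fract (l * t) / t ^ 2

noncomputable def G (t : ℝ) : ℝ := (Int.fract t ^ 2 - Int.fract t) / 2

lemma G_cont : Continuous G := by
  have : Continuous fun x : ℝ => ((Int.fract x) ^ 2 - Int.fract x) / 2 := by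
    apply ContinuousOn.comp_fract (f := fun _ y : ℝ => (y ^ 2 - y) / 2) (s := id)
    · exact (Continuous.continuousOn (by fun_prop))
    · exact continuous_id
    · intro _; norm_num
  exact this

lemma G_bound (t : ℝ) : |G t| ≤ 1 / 8 := by
  have h0 := Int.fract_nonneg t
  have h1 := Int.fract_lt_one t
  rw [abs_le]
  constructor <;> [skip; skip] <;> unfold G <;> nlinarith [sq_nonneg (Int.fract t - 1/2)]

lemma G_deriv (t : ℝ) : HasDerivWithinAt G (Int.fract t - 1/2) (Ioi t) t := by
  have hfl : (⌊t⌋ : ℝ) ≤ t := Int.floor_le t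
  have hlt : t < ⌊t⌋ + 1 := Int.lt_floor_add_one t
  have hpoly : HasDerivWithinAt (fun s : ℝ => ((s - ⌊t⌋) ^ 2 - (s - ⌊t⌋)) / 2)
      (Int.fract t - 1/2) (Ioi t) t := by
    have : HasDerivAt (fun s : ℝ => ((s - ⌊t⌋) ^ 2 - (s - ⌊t⌋)) / 2)
        ((2 * (t - ⌊t⌋) * 1 - 1) / 2) t := by
      have h1 : HasDerivAt (fun s : ℝ => s - (⌊t⌋:ℝ)) 1 t := by
        simpa using (hasDerivAt_id t).sub_const (⌊t⌋:ℝ)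
      have := ((h1.pow 2).sub h1).div_const 2
      simpa using this
    have heq : (2 * (t - ⌊t⌋) * 1 - 1) / 2 = Int.fract t - 1/2 := by
      rw [Int.fract]; ring
    rw [heq] at this
    exact this.hasDerivWithinAt
  apply hpoly.congr_of_eventuallyEq
  · filter_upwards [Ioo_mem_nhdsGT_of_mem (Set.mem_Ico.mpr ⟨le_refl t, hlt⟩)] with s hs
    have : ⌊s⌋ = ⌊t⌋ := by
      rw [Int.floor_eq_iff]
      · exact ⟨le_of_lt (lt_of_le_of_lt hfl hs.1), by exact_mod_cast hs.2⟩
    unfold G Int.fract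
    rw [this]
  · unfold G Int.fract
    rfl

lemma integrableOn_inv_sq {a : ℝ} (ha : 0 < a) :
    IntegrableOn (fun t : ℝ => 1 / t ^ 2) (Ioi a) := by
  have := integrableOn_Ioi_rpow_of_lt (a := (-2)) (by norm_num) ha
  apply this.congr_fun _ measurableSet_Ioi
  intro t ht
  have h0 : (0:ℝ) < t := lt_trans ha ht
  show t ^ ((-2):ℝ) = 1 / t ^ 2
  rw [show ((-2):ℝ) = -(2:ℕ) by norm_num, Real.rpow_neg h0.le, Real.rpow_natCast]
  simp [one_div]

lemma integrableOn_of_le_inv_sq {a : ℝ} (ha : 0 < a) {f : ℝ → ℝ}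
    (hm : Measurable f) (hb : ∀ t ∈ Ioi a, |f t| ≤ 1 / t ^ 2) :
    IntegrableOn f (Ioi a) := by
  apply Integrable.mono (integrableOn_inv_sq ha) hm.aestronglyMeasurable
  filter_upwards [ae_restrict_mem measurableSet_Ioi] with t ht
  rw [Real.norm_eq_abs, Real.norm_eq_abs]
  exact (hb t ht).trans (le_abs_self _)

lemma meas_f (l : ℝ) : Measurable (fun t : ℝ => Int.fract t * Int.fract (l * t) / t ^ 2) := by
  exact (measurable_fract.mul (measurable_fract.comp (measurable_id.const_mul l))).div
    (measurable_id.pow_const 2)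

lemma f_le_inv_sq (l : ℝ) (t : ℝ) (ht : 0 < t) :
    |Int.fract t * Int.fract (l * t) / t ^ 2| ≤ 1 / t ^ 2 := by
  rw [abs_div, abs_of_pos (by positivity : (0:ℝ) < t ^ 2)]
  gcongr
  have h0 := Int.fract_nonneg t
  have h0' := Int.fract_nonneg (l * t)
  rw [abs_of_nonneg (mul_nonneg h0 h0')]
  exact mul_le_one₀ (Int.fract_lt_one t).le h0' (Int.fract_lt_one (l*t)).le

lemma part1 {l : ℝ} (hl : 0 < l) :
    IntegrableOn (fun t => Int.fract t * Int.fract (l * t) / t ^ 2) (Ioi 0) := by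
  set m := min 1 (1/l) with hm
  have hm0 : 0 < m := lt_min one_pos (by positivity)
  rw [← Ioc_union_Ioi_eq_Ioi (le_of_lt hm0)]
  apply IntegrableOn.union
  · rw [IntegrableOn, Measure.restrict_congr_set Ioo_ae_eq_Ioc.symm]
    have : EqOn (fun t => Int.fract t * Int.fract (l * t) / t ^ 2) (fun _ => l) (Ioo 0 m) := by
      intro t ht
      have ht1 : t < 1 := lt_of_lt_of_le ht.2 (min_le_left _ _)
      have htl : l * t < 1 := by
        have : t < 1/l := lt_of_lt_of_le ht.2 (min_le_right _ _)
        rw [lt_div_iff₀ hl] at this; linarith [this]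
      have h1 : Int.fract t = t := Int.fract_eq_self.mpr ⟨le_of_lt ht.1, ht1⟩
      have h2 : Int.fract (l * t) = l * t :=
        Int.fract_eq_self.mpr ⟨mul_nonneg hl.le ht.1.le, htl⟩
      show Int.fract t * Int.fract (l * t) / t ^ 2 = l
      rw [h1, h2]
      have htne : t ≠ 0 := ne_of_gt ht.1
      field_simp
    rw [integrable_congr (ae_restrict_of_forall_mem measurableSet_Ioo this)]
    exact integrableOn_const measure_Ioo_lt_top.ne
  · exact integrableOn_of_le_inv_sq hm0 (meas_f l) (fun t ht => f_le_inv_sq l t (lt_trans hm0 ht))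

lemma fract_div_integrable {X : ℝ} (hX : 1 ≤ X) :
    IntegrableOn (fun t => Int.fract t / t) (Ioc (1:ℝ) X) := by
  apply Measure.integrableOn_of_bounded (M := 1) measure_Ioc_lt_top.ne
    ((measurable_fract.div measurable_id).aestronglyMeasurable)
  filter_upwards [ae_restrict_mem measurableSet_Ioc] with t ht
  rw [Real.norm_eq_abs, Pi.div_apply, abs_div]
  simp only [id_eq]
  rw [div_le_one (by rw [abs_of_pos (lt_of_lt_of_le one_pos ht.1.le)]; linarith [ht.1])]
  rw [abs_of_nonneg (Int.fract_nonneg t), abs_of_pos (lt_of_lt_of_le one_pos ht.1.le)]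
  linarith [Int.fract_lt_one t, ht.1]

lemma G_div_sq_integrable {X : ℝ} (hX : 1 ≤ X) :
    IntegrableOn (fun t => G t / t ^ 2) (Ioc (1:ℝ) X) := by
  rw [← intervalIntegrable_iff_integrableOn_Ioc_of_le hX]
  apply ContinuousOn.intervalIntegrable
  rw [uIcc_of_le hX]
  exact G_cont.continuousOn.div (continuous_pow 2).continuousOn
    (fun x hx => by have : (0:ℝ) < x := lt_of_lt_of_le one_pos hx.1; positivity)

lemma key1 {X : ℝ} (hX : 1 ≤ X) :
    ∫ t in Ioc (1:ℝ) X, Int.fract t / t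
      = 1/2 * Real.log X + G X / X + ∫ t in Ioc (1:ℝ) X, G t / t ^ 2 := by
  set F : ℝ → ℝ := fun t => 1/2 * Real.log t + G t / t with hF
  have hderiv : ∀ t ∈ Ioo (1:ℝ) X, HasDerivWithinAt F
      (Int.fract t / t - G t / t ^ 2) (Ioi t) t := by
    intro t ht
    have ht0 : (0:ℝ) < t := lt_trans one_pos ht.1
    have h1 : HasDerivWithinAt (fun t : ℝ => 1/2 * Real.log t) (1/2 * t⁻¹) (Ioi t) t :=
      ((Real.hasDerivAt_log (ne_of_gt ht0)).const_mul (1/2)).hasDerivWithinAt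
    have h2 : HasDerivWithinAt (fun t : ℝ => G t / t)
        (((Int.fract t - 1/2) * t - G t * 1) / t ^ 2) (Ioi t) t :=
      (G_deriv t).div ((hasDerivAt_id t).hasDerivWithinAt) (ne_of_gt ht0)
    have := h1.add h2
    refine this.congr_deriv ?_
    field_simp
    ring
  have hcont : ContinuousOn F (uIcc 1 X) := by
    rw [uIcc_of_le hX]
    apply ContinuousOn.add
    · exact continuousOn_const.mul (Real.continuousOn_log.mono
        (fun x hx => ne_of_gt (lt_of_lt_of_le one_pos hx.1)))
    · exact G_cont.continuousOn.div continuous_id.continuousOn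
        (fun x hx => ne_of_gt (lt_of_lt_of_le one_pos hx.1))
  have hint : IntervalIntegrable (fun t => Int.fract t / t - G t / t ^ 2) volume 1 X := by
    rw [intervalIntegrable_iff_integrableOn_Ioc_of_le hX]
    exact (fract_div_integrable hX).sub (G_div_sq_integrable hX)
  have heq := intervalIntegral.integral_eq_sub_of_hasDeriv_right hcont
    (by rwa [min_eq_left hX, max_eq_right hX]) hint
  rw [intervalIntegral.integral_of_le hX] at heq
  have hsub : ∫ t in Ioc (1:ℝ) X, (Int.fract t / t - G t / t ^ 2)
      = (∫ t in Ioc (1:ℝ) X, Int.fract t / t) - ∫ t in Ioc (1:ℝ) X, G t / t ^ 2 :=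
    integral_sub (fract_div_integrable hX) (G_div_sq_integrable hX)
  rw [hsub] at heq
  have hF1 : F 1 = 0 := by
    simp [hF, G, Real.log_one, Int.fract_one]
  have hFX : F X = 1/2 * Real.log X + G X / X := rfl
  rw [hF1, hFX, sub_zero] at heq
  linarith [heq]

lemma Phi_deriv {l : ℝ} (hl : 0 < l) (u : ℝ) :
    HasDerivWithinAt (fun u : ℝ => l * G (u / l)) (Int.fract (u / l) - 1/2) (Ioi u) u := by
  have hinner : HasDerivWithinAt (fun u : ℝ => u / l) (1 / l) (Ioi u) u :=
    ((hasDerivAt_id u).div_const l).hasDerivWithinAt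
  have hmaps : MapsTo (fun u : ℝ => u / l) (Ioi u) (Ioi (u / l)) := by
    intro x hx
    simp only [mem_Ioi] at *
    gcongr
  have hcomp := HasDerivWithinAt.comp u (G_deriv (u / l)) hinner hmaps
  have := hcomp.const_mul l
  refine this.congr_deriv ?_
  field_simp

lemma tail_piece {l : ℝ} (hl : 0 < l) {a : ℝ} (ha : 1 ≤ a) (hfloor : ∀ u ∈ Ioo a (a+1), Int.fract u = u - a) :
    |∫ u in Ioc a (a+1), Int.fract u * (Int.fract (u / l) - 1/2) / u ^ 2| ≤ l / a ^ 2 := by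
  have ha0 : (0:ℝ) < a := lt_of_lt_of_le one_pos ha
  set ψ : ℝ → ℝ := fun u => (u - a) / u ^ 2 with hψ
  set Φ : ℝ → ℝ := fun u => l * G (u / l) with hΦ
  set P : ℝ → ℝ := fun u => ψ u * Φ u with hP
  have hψd : ∀ u : ℝ, 0 < u → HasDerivAt ψ ((2 * a - u) / u ^ 3) u := by
    intro u hu
    have h := ((hasDerivAt_id u).sub_const a).div (hasDerivAt_pow 2 u)
      (pow_ne_zero 2 (ne_of_gt hu))
    refine h.congr_deriv ?_
    have : u ≠ 0 := ne_of_gt hu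
    simp only [id_eq]
    field_simp
    ring
  have hΦcont : Continuous Φ := continuous_const.mul (G_cont.comp (continuous_id.div_const l))
  have hψcont : ContinuousOn ψ (Icc a (a+1)) := by
    apply ContinuousOn.div ((continuous_id.sub continuous_const).continuousOn)
      ((continuous_pow 2).continuousOn)
    intro x hx
    have : (0:ℝ) < x := lt_of_lt_of_le ha0 hx.1
    positivity
  have hPd : ∀ u ∈ Ioo a (a+1), HasDerivWithinAt P
      ((2 * a - u) / u ^ 3 * Φ u + ψ u * (Int.fract (u / l) - 1/2)) (Ioi u) u := by
    intro u hu
    exact ((hψd u (lt_trans ha0 hu.1)).hasDerivWithinAt).mul (Phi_deriv hl u)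
  have hint1 : IntegrableOn (fun u => (2 * a - u) / u ^ 3 * Φ u) (Ioc a (a+1)) := by
    apply ContinuousOn.integrableOn_Icc (μ := volume) ?_ |>.mono_set Ioc_subset_Icc_self
    apply ContinuousOn.mul ?_ hΦcont.continuousOn
    apply ContinuousOn.div ((continuous_const.sub continuous_id).continuousOn)
      ((continuous_pow 3).continuousOn)
    intro x hx
    have : (0:ℝ) < x := lt_of_lt_of_le ha0 hx.1
    positivity
  have hint2 : IntegrableOn (fun u => ψ u * (Int.fract (u / l) - 1/2)) (Ioc a (a+1)) := by
    apply Measure.integrableOn_of_bounded (M := 1) measure_Ioc_lt_top.ne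
    · apply Measurable.aestronglyMeasurable
      apply Measurable.mul
      · exact (measurable_id.sub_const a).div (measurable_id.pow_const 2)
      · exact (measurable_fract.comp (measurable_id.div_const l)).sub_const (1/2)
    · filter_upwards [ae_restrict_mem measurableSet_Ioc] with u hu
      have hu0 : (0:ℝ) < u := lt_trans ha0 hu.1
      rw [Real.norm_eq_abs, abs_mul]
      have h1 : |ψ u| ≤ 1 := by
        rw [hψ]
        show |(u - a) / u ^ 2| ≤ 1
        rw [abs_div, abs_of_pos (by positivity : (0:ℝ) < u^2), div_le_one (by positivity)]
        rw [abs_of_nonneg (by linarith [hu.1] : (0:ℝ) ≤ u - a)]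
        nlinarith [hu.1, hu.2, ha0]
      have h2 : |Int.fract (u / l) - 1/2| ≤ 1 := by
        have := Int.fract_nonneg (u / l)
        have := Int.fract_lt_one (u / l)
        rw [abs_le]; constructor <;> linarith
      calc |ψ u| * |Int.fract (u/l) - 1/2| ≤ 1 * 1 :=
            mul_le_mul h1 h2 (abs_nonneg _) zero_le_one
        _ = 1 := by norm_num
  have hcontP : ContinuousOn P (uIcc a (a+1)) := by
    rw [uIcc_of_le (by linarith)]
    exact hψcont.mul hΦcont.continuousOn
  have hintF : IntervalIntegrable
      (fun u => (2 * a - u) / u ^ 3 * Φ u + ψ u * (Int.fract (u / l) - 1/2)) volume a (a+1) := by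
    rw [intervalIntegrable_iff_integrableOn_Ioc_of_le (by linarith)]
    exact hint1.add hint2
  have heq := intervalIntegral.integral_eq_sub_of_hasDeriv_right hcontP
    (by rwa [min_eq_left (by linarith : a ≤ a+1), max_eq_right (by linarith : a ≤ a+1)]) hintF
  rw [intervalIntegral.integral_of_le (by linarith : a ≤ a+1)] at heq
  rw [integral_add hint1 hint2] at heq
  have hPa : P a = 0 := by simp [hP, hψ]
  have hcongr : ∫ u in Ioc a (a+1), Int.fract u * (Int.fract (u / l) - 1/2) / u ^ 2
      = ∫ u in Ioc a (a+1), ψ u * (Int.fract (u / l) - 1/2) := by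
    rw [← setIntegral_congr_set Ioo_ae_eq_Ioc, ← setIntegral_congr_set Ioo_ae_eq_Ioc]
    apply setIntegral_congr_fun measurableSet_Ioo
    intro u hu
    show Int.fract u * (Int.fract (u / l) - 1/2) / u ^ 2 = ψ u * (Int.fract (u / l) - 1/2)
    rw [hfloor u hu]
    simp only [hψ]
    ring
  rw [hcongr]
  have key : ∫ u in Ioc a (a+1), ψ u * (Int.fract (u / l) - 1/2)
      = P (a+1) - P a - ∫ u in Ioc a (a+1), (2 * a - u) / u ^ 3 * Φ u := by
    linarith [heq]
  rw [key, hPa, sub_zero]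
  have hbP : |P (a+1)| ≤ l / (8 * a ^ 2) := by
    rw [hP]
    show |ψ (a+1) * Φ (a+1)| ≤ l / (8 * a ^ 2)
    rw [abs_mul, hψ, hΦ]
    show |(a + 1 - a) / (a+1) ^ 2| * |l * G ((a+1)/l)| ≤ l / (8 * a ^ 2)
    rw [abs_mul]
    have h1 : |(a + 1 - a) / (a+1) ^ 2| ≤ 1 / a ^ 2 := by
      rw [show a + 1 - a = 1 by ring, abs_of_pos (by positivity)]
      rw [div_le_div_iff₀ (by positivity) (by positivity)]
      nlinarith
    have h2 : |l| * |G ((a+1)/l)| ≤ l * (1/8) := by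
      rw [abs_of_pos hl]
      exact mul_le_mul_of_nonneg_left (G_bound _) hl.le
    calc |(a + 1 - a) / (a+1) ^ 2| * (|l| * |G ((a+1)/l)|) ≤ (1 / a^2) * (l * (1/8)) :=
          mul_le_mul h1 h2 (by positivity) (by positivity)
      _ = l / (8 * a ^ 2) := by ring
  have hbI : |∫ u in Ioc a (a+1), (2 * a - u) / u ^ 3 * Φ u| ≤ l / (8 * a ^ 2) := by
    have hb : ∀ u ∈ Ioc a (a+1), ‖(2 * a - u) / u ^ 3 * Φ u‖ ≤ l / (8 * a ^ 2) := by
      intro u hu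
      have hu0 : (0:ℝ) < u := lt_trans ha0 hu.1
      rw [Real.norm_eq_abs, abs_mul, abs_div]
      have h1 : |2 * a - u| ≤ a := by
        rw [abs_le]; constructor <;> [nlinarith [hu.2]; nlinarith [hu.1]]
      have h2 : |Φ u| ≤ l / 8 := by
        rw [hΦ]
        show |l * G (u/l)| ≤ l / 8
        rw [abs_mul, abs_of_pos hl]
        calc l * |G (u/l)| ≤ l * (1/8) := mul_le_mul_of_nonneg_left (G_bound _) hl.le
          _ = l / 8 := by ring
      have h3 : |2 * a - u| / |u ^ 3| ≤ a / a ^ 3 := by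
        rw [abs_of_pos (by positivity : (0:ℝ) < u ^ 3)]
        apply div_le_div₀ (by positivity) h1 (by positivity)
        exact pow_le_pow_left₀ ha0.le hu.1.le 3
      calc |2 * a - u| / |u ^ 3| * |Φ u| ≤ (a / a ^ 3) * (l / 8) :=
            mul_le_mul h3 h2 (abs_nonneg _) (by positivity)
        _ = l / (8 * a ^ 2) := by field_simp
    have hn := norm_setIntegral_le_of_norm_le_const (μ := volume) (s := Ioc a (a+1))
      measure_Ioc_lt_top hb
    rw [Real.volume_real_Ioc_of_le (by linarith)] at hn
    simp only [add_sub_cancel_left, ENNReal.toReal_ofReal (by norm_num : (0:ℝ) ≤ 1), mul_one] at hn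
    rw [Real.norm_eq_abs] at hn
    linarith [hn]
  calc |P (a+1) - ∫ u in Ioc a (a+1), (2 * a - u) / u ^ 3 * Φ u|
      ≤ |P (a+1)| + |∫ u in Ioc a (a+1), (2 * a - u) / u ^ 3 * Φ u| := abs_sub _ _
    _ ≤ l / (8 * a ^ 2) + l / (8 * a ^ 2) := add_le_add hbP hbI
    _ ≤ l / a ^ 2 := by
        rw [← add_div, div_le_div_iff₀ (by positivity) (by positivity)]
        nlinarith [hl, ha0]

lemma iUnion_Ioc_eq : (⋃ k : ℕ, Ioc ((k:ℝ)+1) ((k:ℝ)+1+1)) = Ioi (1:ℝ) := by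
  ext x
  simp only [mem_iUnion, mem_Ioc, mem_Ioi]
  constructor
  · rintro ⟨k, hk1, _⟩
    have : (0:ℝ) ≤ (k:ℝ) := Nat.cast_nonneg k
    linarith
  · intro hx
    have h2 : 2 ≤ ⌈x⌉ := by
      have : (1:ℤ) < ⌈x⌉ := Int.lt_ceil.mpr (by exact_mod_cast hx)
      omega
    refine ⟨(⌈x⌉ - 2).toNat, ?_, ?_⟩
    all_goals {
      have h := Int.toNat_of_nonneg (show (0:ℤ) ≤ ⌈x⌉ - 2 by omega)
      have hc : ((⌈x⌉ - 2).toNat : ℝ) = (⌈x⌉:ℝ) - 2 := by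
        exact_mod_cast congrArg (fun z : ℤ => (z:ℝ)) h
      rw [hc]
      have h1 := Int.ceil_lt_add_one x
      have h2 := Int.le_ceil x
      linarith }

lemma fract_eq_on_Ioo (k : ℕ) : ∀ u ∈ Ioo ((k:ℝ)+1) ((k:ℝ)+1+1), Int.fract u = u - ((k:ℝ)+1) := by
  intro u hu
  have hfl : ⌊u⌋ = (k:ℤ) + 1 := by
    rw [Int.floor_eq_iff]
    constructor
    · push_cast; linarith [hu.1]
    · push_cast; linarith [hu.2]
  rw [Int.fract, hfl]
  push_cast; ring

lemma E_integrable {l : ℝ} (hl : 0 < l) :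
    IntegrableOn (fun u => Int.fract u * (Int.fract (u / l) - 1/2) / u ^ 2) (Ioi (1:ℝ)) := by
  apply integrableOn_of_le_inv_sq one_pos
  · exact ((measurable_fract.mul ((measurable_fract.comp (measurable_id.div_const l)).sub_const
      (1/2))).div (measurable_id.pow_const 2))
  · intro t ht
    have ht0 : (0:ℝ) < t := lt_trans one_pos ht
    rw [abs_div, abs_of_pos (by positivity : (0:ℝ) < t ^ 2)]
    gcongr
    rw [abs_mul]
    have h0 := Int.fract_nonneg t
    have h1 := Int.fract_lt_one t
    have h2 := Int.fract_nonneg (t / l)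
    have h3 := Int.fract_lt_one (t / l)
    calc |Int.fract t| * |Int.fract (t/l) - 1/2| ≤ 1 * 1 := by
          apply mul_le_mul ?_ ?_ (abs_nonneg _) zero_le_one
          · rw [abs_of_nonneg h0]; linarith
          · rw [abs_le]; constructor <;> linarith
      _ = 1 := by norm_num

lemma base_summable : Summable (fun k : ℕ => 1 / ((k:ℝ)+1) ^ 2) := by
  have h := Real.summable_one_div_nat_pow.mpr (by norm_num : 1 < 2)
  have := (summable_nat_add_iff (f := fun n : ℕ => 1 / (n:ℝ) ^ 2) 1).mpr h
  apply this.congr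
  intro k
  push_cast
  ring_nf

lemma E_bound {l : ℝ} (hl : 0 < l) :
    |∫ u in Ioi (1:ℝ), Int.fract u * (Int.fract (u / l) - 1/2) / u ^ 2|
      ≤ (∑' k : ℕ, 1 / ((k:ℝ)+1) ^ 2) * l := by
  have hmeas : ∀ k : ℕ, MeasurableSet (Ioc ((k:ℝ)+1) ((k:ℝ)+1+1)) := fun k => measurableSet_Ioc
  have hdisj : Pairwise (Function.onFun Disjoint fun k : ℕ => Ioc ((k:ℝ)+1) ((k:ℝ)+1+1)) := by
    intro i j hij
    rw [Function.onFun, Set.Ioc_disjoint_Ioc]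
    rcases lt_or_gt_of_ne hij with h | h
    · have : (i:ℝ) + 1 ≤ (j:ℝ) := by exact_mod_cast Nat.succ_le_of_lt h
      calc min ((i:ℝ)+1+1) ((j:ℝ)+1+1) ≤ (i:ℝ)+1+1 := min_le_left _ _
        _ ≤ max ((i:ℝ)+1) ((j:ℝ)+1) := le_trans (by linarith) (le_max_right _ _)
    · have : (j:ℝ) + 1 ≤ (i:ℝ) := by exact_mod_cast Nat.succ_le_of_lt h
      calc min ((i:ℝ)+1+1) ((j:ℝ)+1+1) ≤ (j:ℝ)+1+1 := min_le_right _ _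
        _ ≤ max ((i:ℝ)+1) ((j:ℝ)+1) := le_trans (by linarith) (le_max_left _ _)
  have hintU : IntegrableOn (fun u => Int.fract u * (Int.fract (u / l) - 1/2) / u ^ 2)
      (⋃ k : ℕ, Ioc ((k:ℝ)+1) ((k:ℝ)+1+1)) := by
    rw [iUnion_Ioc_eq]; exact E_integrable hl
  have hsum := integral_iUnion hmeas hdisj hintU
  rw [iUnion_Ioc_eq] at hsum
  rw [hsum]
  set e : ℕ → ℝ := fun k => ∫ u in Ioc ((k:ℝ)+1) ((k:ℝ)+1+1),
      Int.fract u * (Int.fract (u / l) - 1/2) / u ^ 2 with he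
  have hterm : ∀ k : ℕ, |e k| ≤ l / ((k:ℝ)+1) ^ 2 := by
    intro k
    exact tail_piece hl (by linarith [Nat.cast_nonneg (α := ℝ) k]) (fract_eq_on_Ioo k)
  have hsummable : Summable (fun k : ℕ => l / ((k:ℝ)+1) ^ 2) := by
    have := base_summable.mul_left l
    apply this.congr
    intro k; ring
  have hsum_abs : Summable (fun k : ℕ => |e k|) :=
    Summable.of_nonneg_of_le (fun k => abs_nonneg _) hterm hsummable
  have habs : (fun k : ℕ => ‖e k‖) = fun k : ℕ => |e k| := funext fun k => Real.norm_eq_abs _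
  calc |∑' k : ℕ, e k| ≤ ∑' k : ℕ, |e k| := by
        have h := norm_tsum_le_tsum_norm (f := e) (by rw [habs]; exact hsum_abs)
        rwa [Real.norm_eq_abs, habs] at h
    _ ≤ ∑' k : ℕ, l / ((k:ℝ)+1) ^ 2 := Summable.tsum_le_tsum hterm hsum_abs hsummable
    _ = (∑' k : ℕ, 1 / ((k:ℝ)+1) ^ 2) * l := by
        rw [← tsum_mul_right]
        congr 1; funext k; ring

lemma split_Ioi {f : ℝ → ℝ} {a b : ℝ} (hab : a ≤ b) (hf : IntegrableOn f (Ioi a)) :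
    ∫ t in Ioi a, f t = (∫ t in Ioc a b, f t) + ∫ t in Ioi b, f t := by
  rw [← Ioc_union_Ioi_eq_Ioi hab]
  rw [setIntegral_union (Ioc_disjoint_Ioi le_rfl) measurableSet_Ioi
    (hf.mono_set Ioc_subset_Ioi_self) (hf.mono_set (Ioi_subset_Ioi hab))]

lemma inv_sq_tail {X : ℝ} (hX : 0 < X) : ∫ t in Ioi X, 1 / t ^ 2 = 1 / X := by
  have h := integral_Ioi_rpow_of_lt (a := -2) (by norm_num) hX
  have hc : ∫ t in Ioi X, 1 / t ^ 2 = ∫ t : ℝ in Ioi X, t ^ ((-2):ℝ) := by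
    apply setIntegral_congr_fun measurableSet_Ioi
    intro t ht
    have h0 : (0:ℝ) < t := lt_trans hX ht
    show 1 / t ^ 2 = t ^ ((-2):ℝ)
    rw [show ((-2):ℝ) = -(2:ℕ) by norm_num, Real.rpow_neg h0.le, Real.rpow_natCast]
    simp [one_div]
  rw [hc, h]
  rw [show (-2 + 1 : ℝ) = -1 by norm_num, Real.rpow_neg_one]
  field_simp

lemma G_div_sq_int : IntegrableOn (fun t => G t / t ^ 2) (Ioi (1:ℝ)) := by
  apply integrableOn_of_le_inv_sq one_pos
  · exact ((measurable_fract.pow_const 2).sub measurable_fract).div_const 2 |>.div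
      (measurable_id.pow_const 2)
  · intro t ht
    have h0 : (0:ℝ) < t := lt_trans one_pos ht
    rw [abs_div, abs_of_pos (by positivity : (0:ℝ) < t^2)]
    gcongr
    exact (G_bound t).trans (by norm_num)

lemma G_tail_bound {X : ℝ} (hX : 1 ≤ X) :
    |∫ t in Ioi X, G t / t ^ 2| ≤ 1/8 * (1 / X) := by
  have hX0 : (0:ℝ) < X := lt_of_lt_of_le one_pos hX
  have hint : IntegrableOn (fun t => G t / t ^ 2) (Ioi X) :=
    G_div_sq_int.mono_set (Ioi_subset_Ioi hX)
  have hint2 : IntegrableOn (fun t : ℝ => 1/8 * (1 / t ^ 2)) (Ioi X) :=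
    (integrableOn_inv_sq hX0).const_mul _
  calc |∫ t in Ioi X, G t / t ^ 2| ≤ ∫ t in Ioi X, |G t| / t ^ 2 := by
        have := norm_integral_le_integral_norm (μ := volume.restrict (Ioi X))
          (f := fun t => G t / t ^ 2)
        simpa [Real.norm_eq_abs] using this
    _ ≤ ∫ t in Ioi X, 1/8 * (1 / t ^ 2) := by
        apply setIntegral_mono_on ?_ hint2 measurableSet_Ioi ?_
        · have habs : IntegrableOn (fun t => |G t / t ^ 2|) (Ioi X) := hint.abs
          apply habs.congr_fun ?_ measurableSet_Ioi
          intro t ht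
          have h0 : (0:ℝ) < t := lt_trans hX0 ht
          show |G t / t ^ 2| = |G t| / t ^ 2
          rw [abs_div, abs_of_pos (by positivity : (0:ℝ) < t^2)]
        · intro t ht
          have h0 : (0:ℝ) < t := lt_trans hX0 ht
          rw [show (1:ℝ)/8 * (1/t^2) = (1/8)/t^2 by ring]
          gcongr
          exact G_bound t
    _ = 1/8 * (1 / X) := by rw [integral_const_mul, inv_sq_tail hX0]

lemma subst_tail {l : ℝ} (hl : 0 < l) :
    ∫ t in Ioi (1/l), Int.fract t * Int.fract (l * t) / t ^ 2
      = l * ∫ u in Ioi (1:ℝ), Int.fract u * Int.fract (u / l) / u ^ 2 := by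
  set g : ℝ → ℝ := fun u => Int.fract (u / l) * Int.fract u * l ^ 2 / u ^ 2 with hg
  have hX0 : (0:ℝ) < 1/l := by positivity
  have step1 : ∫ t in Ioi (1/l), Int.fract t * Int.fract (l * t) / t ^ 2
      = ∫ t in Ioi (1/l), g (l * t) := by
    apply setIntegral_congr_fun measurableSet_Ioi
    intro t ht
    have ht0 : (0:ℝ) < t := lt_trans hX0 ht
    show Int.fract t * Int.fract (l * t) / t ^ 2
      = Int.fract (l * t / l) * Int.fract (l * t) * l ^ 2 / (l * t) ^ 2
    rw [mul_div_cancel_left₀ t (ne_of_gt hl)]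
    field_simp
  rw [step1, integral_comp_mul_left_Ioi g (1/l) hl,
    show l * (1/l) = 1 by field_simp]
  have step3 : ∫ u in Ioi (1:ℝ), g u
      = l ^ 2 * ∫ u in Ioi (1:ℝ), Int.fract u * Int.fract (u / l) / u ^ 2 := by
    rw [← integral_const_mul]
    apply setIntegral_congr_fun measurableSet_Ioi
    intro u hu
    show Int.fract (u / l) * Int.fract u * l ^ 2 / u ^ 2
      = l ^ 2 * (Int.fract u * Int.fract (u / l) / u ^ 2)
    ring
  rw [step3, smul_eq_mul]
  field_simp

lemma fract_div_sq_int : IntegrableOn (fun t => Int.fract t / t ^ 2) (Ioi (1:ℝ)) := by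
  apply integrableOn_of_le_inv_sq one_pos (measurable_fract.div (measurable_id.pow_const 2))
  intro t ht
  have h0 : (0:ℝ) < t := lt_trans one_pos ht
  simp only [id_eq, Pi.div_apply]
  rw [abs_div, abs_of_pos (by positivity : (0:ℝ) < t^2)]
  gcongr
  rw [abs_of_nonneg (Int.fract_nonneg t)]
  exact (Int.fract_lt_one t).le

lemma prod_int {l : ℝ} (hl : 0 < l) :
    IntegrableOn (fun u => Int.fract u * Int.fract (u / l) / u ^ 2) (Ioi (1:ℝ)) := by
  apply integrableOn_of_le_inv_sq one_pos
  · exact (measurable_fract.mul (measurable_fract.comp (measurable_id.div_const l))).div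
      (measurable_id.pow_const 2)
  · intro t ht
    have h0 : (0:ℝ) < t := lt_trans one_pos ht
    rw [abs_div, abs_of_pos (by positivity : (0:ℝ) < t^2)]
    gcongr
    rw [abs_mul, abs_of_nonneg (Int.fract_nonneg t), abs_of_nonneg (Int.fract_nonneg _)]
    exact mul_le_one₀ (Int.fract_lt_one t).le (Int.fract_nonneg _) (Int.fract_lt_one _).le

lemma head_eq {l : ℝ} (hl : 0 < l) (hl1 : l ≤ 1) :
    ∫ t in Ioc (0:ℝ) 1, Int.fract t * Int.fract (l * t) / t ^ 2 = l := by
  rw [← setIntegral_congr_set Ioo_ae_eq_Ioc]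
  have hcongr : ∫ t in Ioo (0:ℝ) 1, Int.fract t * Int.fract (l * t) / t ^ 2
      = ∫ _t in Ioo (0:ℝ) 1, l := by
    apply setIntegral_congr_fun measurableSet_Ioo
    intro t ht
    have h1 : Int.fract t = t := Int.fract_eq_self.mpr ⟨ht.1.le, ht.2⟩
    have h2 : Int.fract (l * t) = l * t := by
      apply Int.fract_eq_self.mpr
      constructor
      · exact mul_nonneg hl.le ht.1.le
      · nlinarith [ht.2, hl, hl1]
    show Int.fract t * Int.fract (l * t) / t ^ 2 = l
    rw [h1, h2]
    have : t ≠ 0 := ne_of_gt ht.1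
    field_simp
  rw [hcongr, setIntegral_const, Real.volume_real_Ioo, smul_eq_mul]
  norm_num

lemma mid_eq {l : ℝ} (hl : 0 < l) :
    ∫ t in Ioc (1:ℝ) (1/l), Int.fract t * Int.fract (l * t) / t ^ 2
      = l * ∫ t in Ioc (1:ℝ) (1/l), Int.fract t / t := by
  rw [← setIntegral_congr_set Ioo_ae_eq_Ioc, ← setIntegral_congr_set Ioo_ae_eq_Ioc,
    ← integral_const_mul]
  apply setIntegral_congr_fun measurableSet_Ioo
  intro t ht
  have ht0 : (0:ℝ) < t := lt_trans one_pos ht.1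
  have h2 : Int.fract (l * t) = l * t := by
    apply Int.fract_eq_self.mpr
    constructor
    · exact mul_nonneg hl.le ht0.le
    · have := ht.2
      rw [lt_div_iff₀ hl] at this
      linarith
  show Int.fract t * Int.fract (l * t) / t ^ 2 = l * (Int.fract t / t)
  rw [h2]
  have : t ≠ 0 := ne_of_gt ht0
  field_simp

lemma tail_split {l : ℝ} (hl : 0 < l) :
    ∫ u in Ioi (1:ℝ), Int.fract u * Int.fract (u / l) / u ^ 2
      = (∫ u in Ioi (1:ℝ), Int.fract u * (Int.fract (u / l) - 1/2) / u ^ 2)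
        + 1/2 * ∫ u in Ioi (1:ℝ), Int.fract u / u ^ 2 := by
  rw [← integral_const_mul, ← integral_add (E_integrable hl) (fract_div_sq_int.const_mul (1/2))]
  apply setIntegral_congr_fun measurableSet_Ioi
  intro u _
  show Int.fract u * Int.fract (u / l) / u ^ 2
    = Int.fract u * (Int.fract (u / l) - 1/2) / u ^ 2 + 1/2 * (Int.fract u / u ^ 2)
  ring

lemma A1_eq : A 1 = 1 + (2 * ∫ t in Ioi (1:ℝ), G t / t ^ 2)
    + ∫ t in Ioi (1:ℝ), Int.fract t / t ^ 2 := by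
  have h := split_Ioi (a := 0) (b := 1) zero_le_one (part1 one_pos)
  have h2 : ∫ t in Ioi (1:ℝ), Int.fract t * Int.fract (1 * t) / t ^ 2
      = (2 * ∫ t in Ioi (1:ℝ), G t / t ^ 2) + ∫ t in Ioi (1:ℝ), Int.fract t / t ^ 2 := by
    rw [← integral_const_mul, ← integral_add (G_div_sq_int.const_mul 2) fract_div_sq_int]
    apply setIntegral_congr_fun measurableSet_Ioi
    intro t _
    show Int.fract t * Int.fract (1 * t) / t ^ 2 = 2 * (G t / t ^ 2) + Int.fract t / t ^ 2
    rw [one_mul, G]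
    ring
  rw [A, h, head_eq one_pos le_rfl, h2]
  ring

theorem A_integrable_and_asymptotics :
    (∀ l : ℝ, 0 < l →
      IntegrableOn (fun t => Int.fract t * Int.fract (l * t) / t ^ 2) (Ioi 0)) ∧
    ∃ C > 0, ∃ δ > 0, ∀ l : ℝ, 0 < l → l ≤ δ →
      |A l - (l / 2 * Real.log (1 / l) + (1 + A 1) / 2 * l)| ≤ C * l ^ 2 := by
  constructor
  · exact fun l hl => part1 hl
  · set S : ℝ := ∑' k : ℕ, 1 / ((k:ℝ)+1) ^ 2 with hS
    have hS0 : 0 ≤ S := tsum_nonneg (fun k => by positivity)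
    refine ⟨S + 1/4, by linarith, 1/2, by norm_num, ?_⟩
    intro l hl hld
    have hX1 : (1:ℝ) ≤ 1/l := by
      rw [le_div_iff₀ hl]; linarith
    have hX0 : (0:ℝ) < 1/l := by positivity
    -- decompose A l
    have hsplit1 := split_Ioi (a := 0) (b := 1) zero_le_one (part1 hl)
    have hsplit2 := split_Ioi (a := 1) (b := 1/l) hX1
      ((part1 hl).mono_set (Ioi_subset_Ioi zero_le_one))
    have hA : A l = l
        + l * (1/2 * Real.log (1/l) + G (1/l) / (1/l)
            + ((∫ t in Ioi (1:ℝ), G t / t ^ 2) - ∫ t in Ioi (1/l), G t / t ^ 2))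
        + l * ((∫ u in Ioi (1:ℝ), Int.fract u * (Int.fract (u / l) - 1/2) / u ^ 2)
            + 1/2 * ∫ u in Ioi (1:ℝ), Int.fract u / u ^ 2) := by
      rw [A, hsplit1, hsplit2, head_eq hl (by linarith), mid_eq hl, key1 hX1,
        subst_tail hl, tail_split hl]
      have hGsplit := split_Ioi (a := 1) (b := 1/l) hX1 G_div_sq_int
      have : ∫ t in Ioc (1:ℝ) (1/l), G t / t ^ 2
          = (∫ t in Ioi (1:ℝ), G t / t ^ 2) - ∫ t in Ioi (1/l), G t / t ^ 2 := by
        linarith [hGsplit]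
      rw [this]
      ring
    have hA1 : (1 + A 1) / 2 = 1 + (∫ t in Ioi (1:ℝ), G t / t ^ 2)
        + 1/2 * ∫ t in Ioi (1:ℝ), Int.fract t / t ^ 2 := by
      rw [A1_eq]; ring
    have hdiff : A l - (l / 2 * Real.log (1 / l) + (1 + A 1) / 2 * l)
        = l * (G (1/l) / (1/l)) - l * (∫ t in Ioi (1/l), G t / t ^ 2)
          + l * ∫ u in Ioi (1:ℝ), Int.fract u * (Int.fract (u / l) - 1/2) / u ^ 2 := by
      rw [hA, hA1]
      ring
    rw [hdiff]
    -- bounds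
    have hb1 : |G (1/l) / (1/l)| ≤ 1/8 * l := by
      rw [abs_div, abs_of_pos hX0, div_le_iff₀ hX0]
      calc |G (1/l)| ≤ 1/8 := G_bound _
        _ = 1/8 * l * (1/l) := by field_simp
    have hb2 : |∫ t in Ioi (1/l), G t / t ^ 2| ≤ 1/8 * l := by
      have := G_tail_bound hX1
      rwa [one_div_one_div] at this
    have hb3 := E_bound hl
    have habs : |l * (G (1/l) / (1/l)) - l * (∫ t in Ioi (1/l), G t / t ^ 2)
          + l * ∫ u in Ioi (1:ℝ), Int.fract u * (Int.fract (u / l) - 1/2) / u ^ 2|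
        ≤ l * |G (1/l) / (1/l)| + l * |∫ t in Ioi (1/l), G t / t ^ 2|
          + l * |∫ u in Ioi (1:ℝ), Int.fract u * (Int.fract (u / l) - 1/2) / u ^ 2| := by
      calc |l * (G (1/l) / (1/l)) - l * (∫ t in Ioi (1/l), G t / t ^ 2)
            + l * ∫ u in Ioi (1:ℝ), Int.fract u * (Int.fract (u / l) - 1/2) / u ^ 2|
          ≤ |l * (G (1/l) / (1/l)) - l * (∫ t in Ioi (1/l), G t / t ^ 2)|
            + |l * ∫ u in Ioi (1:ℝ), Int.fract u * (Int.fract (u / l) - 1/2) / u ^ 2| :=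
            abs_add_le _ _
        _ ≤ |l * (G (1/l) / (1/l))| + |l * (∫ t in Ioi (1/l), G t / t ^ 2)|
            + |l * ∫ u in Ioi (1:ℝ), Int.fract u * (Int.fract (u / l) - 1/2) / u ^ 2| :=
            add_le_add (abs_sub _ _) le_rfl
        _ = l * |G (1/l) / (1/l)| + l * |∫ t in Ioi (1/l), G t / t ^ 2|
            + l * |∫ u in Ioi (1:ℝ), Int.fract u * (Int.fract (u / l) - 1/2) / u ^ 2| := by
            rw [abs_mul, abs_mul, abs_mul, abs_of_pos hl]
    calc |l * (G (1/l) / (1/l)) - l * (∫ t in Ioi (1/l), G t / t ^ 2)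
          + l * ∫ u in Ioi (1:ℝ), Int.fract u * (Int.fract (u / l) - 1/2) / u ^ 2|
        ≤ l * (1/8 * l) + l * (1/8 * l) + l * (S * l) := by
          refine le_trans habs ?_
          gcongr
        _ = (S + 1/4) * l ^ 2 := by ring
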